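/- Let x be a rational point of the Cantor space lying in the tail equivalence class of a prime word m_x, and let φ be a homeomorphism of the Cantor space normalizing V, so that φ(x) is in the tail class of a prime word m_{φ(x)}. Then for every v ∈ V with v(x) = x and v'(x) ≠ 1, one has log₂((φvφ^{-1})'(φ(x)))/|m_{φ(x)}| = log₂(v'(x))/|m_x|, and log₂(v'(x)) is an integer multiple of |m_x|. -/

import Mathlib

/-! Basic setup: the Cantor space, prefix replacement, Thompson's group `V`,
slopes, dyadic rationals, standard dyadic partitions, locally constant maps,
and the permutation model of the twisted fraction groups `LΓ ⋊ V`. -/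

abbrev Cantor : Type := ℕ → Bool

/-- Concatenation of a finite word with an infinite sequence. -/
def cat (w : List Bool) (x : Cantor) : Cantor :=
  fun n => if n < w.length then w.getD n false else x (n - w.length)

/-- The standard dyadic interval (cylinder) associated to a finite word. -/
def cyl (w : List Bool) : Set Cantor := {x | ∃ y : Cantor, x = cat w y}

/-- Membership in Thompson's group `V`: a homeomorphism of the Cantor space which is
everywhere locally given by prefix replacement. -/
def memV (v : Cantor ≃ₜ Cantor) : Prop :=
  ∀ x : Cantor, ∃ (m w : List Bool) (y : Cantor),
    x = cat m y ∧ ∀ z : Cantor, v (cat m z) = cat w z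

/-- `HasLogSlope v x k` : `k = log₂ v'(x)`, base-2 logarithm of the slope of `v` at `x`. -/
def HasLogSlope (v : Cantor ≃ₜ Cantor) (x : Cantor) (k : ℤ) : Prop :=
  ∃ (m w : List Bool) (y : Cantor),
    x = cat m y ∧ (∀ z : Cantor, v (cat m z) = cat w z) ∧
      k = (m.length : ℤ) - (w.length : ℤ)

open Classical in
noncomputable def logSlope (v : Cantor ≃ₜ Cantor) (x : Cantor) : ℤ :=
  if h : ∃ k : ℤ, HasLogSlope v x k then h.choose else 0

/-- The eventually periodic sequence `c∞ = c·c·c⋯`. -/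
def tailSeq (c : List Bool) : Cantor := fun n => c.getD (n % c.length) false

/-- `x` lies in the tail equivalence class of the word `c`, i.e. `x = y·c∞`. -/
def InTailClass (x : Cantor) (c : List Bool) : Prop :=
  ∃ y : List Bool, x = cat y (tailSeq c)

/-- `x` is eventually periodic (a rational point of the Cantor space). -/
def EvPeriodic (x : Cantor) : Prop :=
  ∃ (y c : List Bool), c ≠ [] ∧ x = cat y (tailSeq c)

/-- A prime word: a nonempty word which is not a proper power of a word. -/
def PrimeWord (c : List Bool) : Prop :=
  c ≠ [] ∧ ∀ (d : List Bool) (k : ℕ), 2 ≤ k → c ≠ (List.replicate k d).flatten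

/-- `conjH φ v = φ ∘ v ∘ φ⁻¹`. -/
def conjH (φ v : Cantor ≃ₜ Cantor) : Cantor ≃ₜ Cantor := φ.symm.trans (v.trans φ)

/-- `φ` normalizes Thompson's group `V` inside `Homeo(𝔠)` : `φ V φ⁻¹ = V`. -/
def NormalizesV (φ : Cantor ≃ₜ Cantor) : Prop :=
  (conjH φ) '' {v | memV v} = {v | memV v}

/-- The copy of the dyadic rationals `Q₂ ⊂ 𝔠` : finitely supported sequences. -/
def InQ2 (x : Cantor) : Prop := ∃ n : ℕ, ∀ m, n ≤ m → x m = false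

def zeroSeq : Cantor := fun _ => false

/-- A standard dyadic partition of the Cantor space. -/
def IsSDP (P : Finset (List Bool)) : Prop :=
  ∀ x : Cantor, ∃! w : List Bool, w ∈ P ∧ x ∈ cyl w

/-- Locally constant map: constant on each piece of some standard dyadic partition. -/
def IsLC {Γ : Type*} (f : Cantor → Γ) : Prop :=
  ∃ P : Finset (List Bool), IsSDP P ∧ ∀ w ∈ P, ∀ y z : Cantor, f (cat w y) = f (cat w z)

/-- `h` agrees on `Q₂` with (the restriction of) a locally constant map. -/
def AgreesOnQ2WithLC {Γ : Type*} (h : Cantor → Γ) : Prop :=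
  ∃ b : Cantor → Γ, IsLC b ∧ ∀ x, InQ2 x → h x = b x

section GroupPart
variable {Γ : Type*} [Group Γ]

/-- `alphaWord α₀ α₁ (m₁⋯m_k) = α_{m_k} ∘ ⋯ ∘ α_{m₁}`. -/
def alphaWord (α₀ α₁ : Γ ≃* Γ) (m : List Bool) : Γ ≃* Γ :=
  m.foldl (fun acc b => acc.trans (if b then α₁ else α₀)) (MulEquiv.refl Γ)

open Classical in
/-- The twisting automorphism `τ_{v,x} = α_{v(I)}⁻¹ ∘ α_I` for a standard dyadic
interval `I` containing `x` and adapted to `v`. -/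
noncomputable def tauEquiv (α₀ α₁ : Γ ≃* Γ) (v : Cantor ≃ₜ Cantor) (x : Cantor) : Γ ≃* Γ :=
  if h : ∃ p : List Bool × List Bool, x ∈ cyl p.1 ∧ ∀ z : Cantor, v (cat p.1 z) = cat p.2 z
  then (alphaWord α₀ α₁ h.choose.1).trans (alphaWord α₀ α₁ h.choose.2).symm
  else MulEquiv.refl Γ

/-- The element `a·v` of the twisted `LΓ ⋊ V`, realized as the permutation
`(x,g) ↦ (v x, a(v x) · τ_{v,x}(g))` of `𝔠 × Γ`. -/
noncomputable def permOf (α₀ α₁ : Γ ≃* Γ) (a : Cantor → Γ) (v : Cantor ≃ₜ Cantor) :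
    Equiv.Perm (Cantor × Γ) where
  toFun p := (v p.1, a (v p.1) * tauEquiv α₀ α₁ v p.1 p.2)
  invFun p := (v.symm p.1, (tauEquiv α₀ α₁ v (v.symm p.1)).symm ((a p.1)⁻¹ * p.2))
  left_inv := by rintro ⟨x, g⟩; simp
  right_inv := by rintro ⟨x, g⟩; simp

end GroupPart

/-- The twisted fraction group `G = LΓ ⋊ V` of the triple `(Γ, α₀, α₁)`,
as a group of permutations of `𝔠 × Γ`. -/
noncomputable def Gsub (Γ : Type*) [Group Γ] (α₀ α₁ : Γ ≃* Γ) :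
    Subgroup (Equiv.Perm (Cantor × Γ)) :=
  Subgroup.closure {p | ∃ a v, IsLC a ∧ memV v ∧ p = permOf α₀ α₁ a v}

/-- The untwisted case `α₀ = α₁ = id`. -/
noncomputable def permOfU {Γ : Type*} [Group Γ] (a : Cantor → Γ) (v : Cantor ≃ₜ Cantor) :=
  permOf (MulEquiv.refl Γ) (MulEquiv.refl Γ) a v

/-- The untwisted fraction group `G = LΓ ⋊ V`. -/
noncomputable def GsubU (Γ : Type*) [Group Γ] := Gsub Γ (MulEquiv.refl Γ) (MulEquiv.refl Γ)

/-- `f ∈ N_{K̄}(G)` : the element `f` of `K̄ = ∏_{Q₂}Γ` normalizes `G = LΓ ⋊ V`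
(untwisted case), i.e. `f·a·(f^v)⁻¹` and `f⁻¹·a·f^v` are locally constant on `Q₂`. -/
def InNormKbar {Γ : Type*} [Group Γ] (f : Cantor → Γ) : Prop :=
  ∀ (a : Cantor → Γ) (v : Cantor ≃ₜ Cantor), IsLC a → memV v →
    AgreesOnQ2WithLC (fun x => f x * a x * (f (v.symm x))⁻¹) ∧
    AgreesOnQ2WithLC (fun x => (f x)⁻¹ * a x * f (v.symm x))


namespace SRI

/-- First `n` letters of a sequence. -/
def preW (z : Cantor) (n : ℕ) : List Bool := List.ofFn fun i : Fin n => z i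

/-- Shift a sequence by `n`. -/
def shf (z : Cantor) (n : ℕ) : Cantor := fun i => z (n + i)

lemma preW_length (z : Cantor) (n : ℕ) : (preW z n).length = n := by
  simp [preW]

lemma cat_eval_lt (w : List Bool) (z : Cantor) {n : ℕ} (h : n < w.length) :
    cat w z n = w.getD n false := by simp [cat, h]

lemma cat_eval_ge (w : List Bool) (z : Cantor) {n : ℕ} (h : w.length ≤ n) :
    cat w z n = z (n - w.length) := by simp [cat, Nat.not_lt.2 h]

lemma cat_eval_add (w : List Bool) (z : Cantor) (n : ℕ) :
    cat w z (w.length + n) = z n := by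
  rw [cat_eval_ge w z (Nat.le_add_right _ _)]
  congr 1; omega

lemma cat_nil (z : Cantor) : cat [] z = z := by
  funext n; simp [cat]

lemma cat_append (a b : List Bool) (z : Cantor) :
    cat (a ++ b) z = cat a (cat b z) := by
  funext n
  by_cases h : n < a.length
  · have L := cat_eval_lt (a++b) z (n := n) (by simp; omega)
    have R := cat_eval_lt a (cat b z) h
    rw [L, R, List.getD_eq_getElem?_getD, List.getD_eq_getElem?_getD,
      List.getElem?_append_left h]
  · by_cases h2 : n < a.length + b.length
    · have L := cat_eval_lt (a++b) z (n := n) (by simp; omega)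
      have R1 := cat_eval_ge a (cat b z) (n := n) (by omega)
      have R2 := cat_eval_lt b z (n := n - a.length) (by omega)
      rw [L, R1, R2, List.getD_eq_getElem?_getD, List.getD_eq_getElem?_getD,
        List.getElem?_append_right (by omega)]
    · have L := cat_eval_ge (a++b) z (n := n) (by simp; omega)
      have R1 := cat_eval_ge a (cat b z) (n := n) (by omega)
      have R2 := cat_eval_ge b z (n := n - a.length) (by omega)
      rw [L, R1, R2]; congr 1; simp; omega

lemma cat_inj {w : List Bool} {y z : Cantor} (h : cat w y = cat w z) : y = z := by
  funext n
  have := congrFun h (w.length + n)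
  rwa [cat_eval_add, cat_eval_add] at this

lemma preW_getD {z : Cantor} {n i : ℕ} (h : i < n) :
    (preW z n).getD i false = z i := by
  rw [List.getD_eq_getElem _ _ (by simpa [preW_length])]
  simp [preW]

lemma preW_congr {z z' : Cantor} {n m : ℕ} (hm : m ≤ n)
    (h : ∀ i < n, z i = z' i) : preW z m = preW z' m := by
  unfold preW
  congr 1; funext i; exact h i (lt_of_lt_of_le i.2 hm)

lemma pre_cat (m : List Bool) (t : Cantor) : preW (cat m t) m.length = m := by
  apply List.ext_getElem (by simp [preW_length])
  intro i h1 h2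
  have : (preW (cat m t) m.length).getD i false = m.getD i false := by
    rw [preW_getD (by simpa [preW_length] using h1), cat_eval_lt _ _ h2]
  rwa [List.getD_eq_getElem _ _ h1, List.getD_eq_getElem _ _ h2] at this

lemma shf_cat (m : List Bool) (t : Cantor) : shf (cat m t) m.length = t := by
  funext n; simp [shf, cat_eval_add]

lemma cat_pre_shf (z : Cantor) (n : ℕ) : cat (preW z n) (shf z n) = z := by
  funext i
  by_cases h : i < n
  · rw [cat_eval_lt _ _ (by simpa [preW_length]), preW_getD h]
  · rw [cat_eval_ge _ _ (by simpa [preW_length] using Nat.le_of_not_lt h)]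
    simp [shf, preW_length]; congr 1; omega

lemma pre_cat_ge {m : List Bool} {t : Cantor} {n : ℕ} (h : m.length ≤ n) :
    preW (cat m t) n = m ++ preW t (n - m.length) := by
  apply List.ext_getElem (by simp [preW_length]; omega)
  intro i h1 h2
  rw [← List.getD_eq_getElem _ false, ← List.getD_eq_getElem _ false]
  rw [preW_getD (by simpa [preW_length] using h1)]
  by_cases hi : i < m.length
  · rw [cat_eval_lt _ _ hi, List.getD_eq_getElem?_getD, List.getD_eq_getElem?_getD,
      List.getElem?_append_left hi]
  · push_neg at hi
    rw [cat_eval_ge _ _ hi, List.getD_eq_getElem?_getD,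
      List.getElem?_append_right hi, ← List.getD_eq_getElem?_getD]
    rw [preW_getD (by simp [preW_length] at h1 ⊢; omega)]

/-- Two prefix decompositions of the same point. -/
lemma prefix_split {x : Cantor} {m m' : List Bool} {y y' : Cantor}
    (h1 : x = cat m y) (h2 : x = cat m' y') (h : m.length ≤ m'.length) :
    m' = m ++ preW y (m'.length - m.length) ∧ y' = shf y (m'.length - m.length) := by
  have hm'e : m' = m ++ preW y (m'.length - m.length) := by
    have e1 : m' = preW x m'.length := by rw [h2, pre_cat]
    have key : preW x m'.length = m ++ preW y (m'.length - m.length) := by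
      rw [h1]; exact pre_cat_ge h
    exact e1.trans key
  refine ⟨hm'e, ?_⟩
  have hx2 : x = cat m' (shf y (m'.length - m.length)) := by
    conv_lhs => rw [h1, ← cat_pre_shf y (m'.length - m.length), ← cat_append]
    rw [← hm'e]
  exact cat_inj (h2.symm.trans hx2)

lemma cat_len_not_lt {A B : List Bool} (h : ∀ z, cat A z = cat B z) :
    ¬ (A.length < B.length) := by
  intro hlt
  have h1 := congrFun (h (fun _ => !(B.getD A.length false))) A.length
  rw [cat_eval_ge _ _ le_rfl, cat_eval_lt _ _ hlt] at h1
  simp at h1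

lemma cat_len_eq {A B : List Bool} (h : ∀ z, cat A z = cat B z) :
    A.length = B.length := by
  have h2 : ∀ z, cat B z = cat A z := fun z => (h z).symm
  have := cat_len_not_lt h
  have := cat_len_not_lt h2
  omega

/-! ### Slope calculus -/

lemma rule_ext {v : Cantor ≃ₜ Cantor} {m w : List Bool}
    (hr : ∀ z, v (cat m z) = cat w z) (e : List Bool) :
    ∀ z, v (cat (m ++ e) z) = cat (w ++ e) z := by
  intro z; rw [cat_append, cat_append]; exact hr (cat e z)

lemma slope_exists {v : Cantor ≃ₜ Cantor} (hv : memV v) (x : Cantor) :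
    ∃ k, HasLogSlope v x k := by
  obtain ⟨m, w, y, hx, hr⟩ := hv x
  exact ⟨_, m, w, y, hx, hr, rfl⟩

lemma hls_unique_aux {v : Cantor ≃ₜ Cantor} {x : Cantor} {k k' : ℤ}
    {m w : List Bool} {y : Cantor} {m' w' : List Bool} {y' : Cantor}
    (hx : x = cat m y) (hr : ∀ z, v (cat m z) = cat w z)
    (hk : k = (m.length : ℤ) - w.length)
    (hx' : x = cat m' y') (hr' : ∀ z, v (cat m' z) = cat w' z)
    (hk' : k' = (m'.length : ℤ) - w'.length)
    (hle : m.length ≤ m'.length) : k = k' := by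
  obtain ⟨hm', -⟩ := prefix_split hx hx' hle
  set e := preW y (m'.length - m.length) with he
  have hre := rule_ext hr e
  have : ∀ z, cat (w ++ e) z = cat w' z := by
    intro z; rw [← hre z, ← hm']; exact (hr' z)
  have hlen := cat_len_eq this
  simp [preW_length] at hlen
  have : m'.length = m.length + e.length := by rw [hm']; simp
  have he' : e.length = m'.length - m.length := by rw [he, preW_length]
  omega

lemma hls_unique {v : Cantor ≃ₜ Cantor} {x : Cantor} {k k' : ℤ}
    (h1 : HasLogSlope v x k) (h2 : HasLogSlope v x k') : k = k' := by
  obtain ⟨m, w, y, hx, hr, hk⟩ := h1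
  obtain ⟨m', w', y', hx', hr', hk'⟩ := h2
  rcases le_total m.length m'.length with h | h
  · exact hls_unique_aux hx hr hk hx' hr' hk' h
  · exact (hls_unique_aux hx' hr' hk' hx hr hk h).symm

lemma hls_refl (x : Cantor) : HasLogSlope (Homeomorph.refl Cantor) x 0 :=
  ⟨[], [], x, by rw [cat_nil], fun z => rfl, by simp⟩

lemma hls_trans {v u : Cantor ≃ₜ Cantor} {x : Cantor} {k j : ℤ}
    (hv : HasLogSlope v x k) (hu : HasLogSlope u (v x) j) :
    HasLogSlope (v.trans u) x (k + j) := by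
  obtain ⟨m, w, y, hx, hr, hk⟩ := hv
  obtain ⟨m', w', y', hx', hr', hj⟩ := hu
  have hvx : v x = cat w y := by rw [hx, hr]
  rcases le_total m'.length w.length with h | h
  · -- m' is a prefix of w
    obtain ⟨hw, -⟩ := prefix_split hx' hvx h
    set e := preW y' (w.length - m'.length) with he
    refine ⟨m, w' ++ e, y, hx, ?_, ?_⟩
    · intro z
      show u (v (cat m z)) = _
      rw [hr z, hw, cat_append, hr', ← cat_append]
    · have : w.length = m'.length + e.length := by rw [hw]; simp
      simp only [List.length_append]
      omega
  · -- w is a prefix of m'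
    obtain ⟨hm', -⟩ := prefix_split hvx hx' h
    set e := preW y (m'.length - w.length) with he
    obtain ⟨-, hy'⟩ := prefix_split hvx hx' h
    refine ⟨m ++ e, w', y', ?_, ?_, ?_⟩
    · rw [cat_append, hx, hy']
      exact congrArg (cat m) (cat_pre_shf y _).symm
    · intro z
      have := rule_ext hr e z
      rw [Homeomorph.trans_apply, this, ← hm', hr']
    · have : m'.length = w.length + e.length := by rw [hm']; simp
      simp only [List.length_append]
      omega

lemma hls_symm {v : Cantor ≃ₜ Cantor} {x : Cantor} {k : ℤ}
    (hv : HasLogSlope v x k) : HasLogSlope v.symm (v x) (-k) := by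
  obtain ⟨m, w, y, hx, hr, hk⟩ := hv
  refine ⟨w, m, y, by rw [hx, hr], ?_, by omega⟩
  intro z
  have := hr z
  apply_fun v.symm at this
  simpa using this.symm

/-- An element fixing `x` with slope `0` is the identity near `x`. -/
lemma local_id_of_slope_zero {v : Cantor ≃ₜ Cantor} {x : Cantor}
    (hfix : v x = x) (h : HasLogSlope v x 0) :
    ∃ m t, x = cat m t ∧ ∀ z, v (cat m z) = cat m z := by
  obtain ⟨m, w, y, hx, hr, hk⟩ := h
  have hlen : m.length = w.length := by omega
  have hw : w = m := by
    have h1 : x = cat w y := by rw [← hfix, hx, hr]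
    have e1 : w = preW x w.length := by rw [h1, pre_cat]
    have e2 : m = preW x m.length := by rw [hx, pre_cat]
    rw [e1, e2, hlen]
  exact ⟨m, y, hx, fun z => by rw [hr z, hw]⟩

/-! ### Topology: cylinders are open, and every open set contains a cylinder -/

def Cyl (n : ℕ) (x : Cantor) : Set Cantor := {z | ∀ i < n, z i = x i}

lemma Cyl_self (n : ℕ) (x : Cantor) : x ∈ Cyl n x := fun _ _ => rfl

lemma isOpen_Cyl (n : ℕ) (x : Cantor) : IsOpen (Cyl n x) := by
  have hE : Cyl n x = ⋂ i : Fin n, {z : Cantor | z i = x i} := by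
    ext z
    simp only [Cyl, Set.mem_setOf_eq, Set.mem_iInter]
    exact ⟨fun h i => h i i.2, fun h i hi => h ⟨i, hi⟩⟩
  rw [hE]
  refine isOpen_iInter_of_finite fun i => ?_
  have hpre : {z : Cantor | z (i : ℕ) = x (i : ℕ)} =
      (fun z : Cantor => z (i : ℕ)) ⁻¹' {x (i : ℕ)} := rfl
  rw [hpre]
  exact IsOpen.preimage (continuous_apply (A := fun _ : ℕ => Bool) (i : ℕ))
    (isOpen_discrete _)

lemma cyl_subset_of_isOpen {S : Set Cantor} (hS : IsOpen S) {x : Cantor} (hx : x ∈ S) :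
    ∃ n, Cyl n x ⊆ S := by
  obtain ⟨I, u, h1, h2⟩ := isOpen_pi_iff.mp hS x hx
  refine ⟨I.sup id + 1, fun z hz => h2 ?_⟩
  intro i hi
  have hle : i ≤ I.sup id := Finset.le_sup (f := id) hi
  have : z i = x i := hz i (by omega)
  rw [this]
  exact (h1 i hi).2

lemma eq_cat_of_mem_Cyl {x z : Cantor} {m : List Bool} {t : Cantor}
    (hx : x = cat m t) (hz : z ∈ Cyl m.length x) :
    z = cat m (shf z m.length) := by
  have h1 : preW z m.length = m := by
    have h2 : preW z m.length = preW x m.length := preW_congr le_rfl hz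
    rw [h2, hx, pre_cat]
  conv_lhs => rw [← cat_pre_shf z m.length, h1]

lemma slope_zero_of_local_id {W : Cantor ≃ₜ Cantor} {ξ : Cantor} {n : ℕ} {K : ℤ}
    (hid : ∀ z ∈ Cyl n ξ, W z = z) (hs : HasLogSlope W ξ K) : K = 0 := by
  obtain ⟨m, w, y, hx, hr, hk⟩ := hs
  set N := max m.length n with hN
  set e := preW y (N - m.length) with he
  have hre := rule_ext hr e
  have hm'' : m ++ e = preW ξ N := by rw [hx, pre_cat_ge (le_max_left _ _)]
  have hlen : (m ++ e).length = N := by rw [hm'', preW_length]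
  have hmem : ∀ z, cat (m ++ e) z ∈ Cyl n ξ := by
    intro z i hi
    have hiN : i < N := lt_of_lt_of_le hi (le_max_right _ _)
    rw [cat_eval_lt _ _ (by rw [hlen]; exact hiN), hm'', preW_getD hiN]
  have hAB : ∀ z, cat (w ++ e) z = cat (m ++ e) z := fun z => by
    rw [← hre z]; exact hid _ (hmem z)
  have := cat_len_eq hAB
  simp only [List.length_append] at this
  omega

/-! ### Conjugation lemmas -/

lemma conjH_apply (ψ w : Cantor ≃ₜ Cantor) (z : Cantor) :
    conjH ψ w z = ψ (w (ψ.symm z)) := rfl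

lemma conjH_fix {ψ w : Cantor ≃ₜ Cantor} {ξ : Cantor} (h : w ξ = ξ) :
    conjH ψ w (ψ ξ) = ψ ξ := by
  rw [conjH_apply, Homeomorph.symm_apply_apply, h]

lemma conjH_trans (ψ a b : Cantor ≃ₜ Cantor) :
    conjH ψ (a.trans b) = (conjH ψ a).trans (conjH ψ b) := by
  ext z; simp [conjH, Homeomorph.trans_apply]

lemma conjH_symm (ψ a : Cantor ≃ₜ Cantor) :
    conjH ψ a.symm = (conjH ψ a).symm := by
  ext z; simp [conjH, Homeomorph.trans_apply]

lemma conjH_refl (ψ : Cantor ≃ₜ Cantor) :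
    conjH ψ (Homeomorph.refl Cantor) = Homeomorph.refl Cantor := by
  ext z; simp [conjH, Homeomorph.trans_apply]

lemma conjH_conjH_symm (ψ w : Cantor ≃ₜ Cantor) : conjH ψ (conjH ψ.symm w) = w := by
  ext z; simp [conjH, Homeomorph.trans_apply]

lemma conjH_symm_conjH (ψ w : Cantor ≃ₜ Cantor) : conjH ψ.symm (conjH ψ w) = w := by
  ext z; simp [conjH, Homeomorph.trans_apply]

/-! ### Iterates -/

def iterH (w : Cantor ≃ₜ Cantor) : ℕ → (Cantor ≃ₜ Cantor)
  | 0 => Homeomorph.refl Cantor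
  | n+1 => (iterH w n).trans w

lemma iterH_fix {w : Cantor ≃ₜ Cantor} {ξ : Cantor} (h : w ξ = ξ) :
    ∀ n, iterH w n ξ = ξ
  | 0 => rfl
  | n+1 => by
      show w (iterH w n ξ) = ξ
      rw [iterH_fix h n, h]

lemma hls_iter {w : Cantor ≃ₜ Cantor} {ξ : Cantor} {k : ℤ} (hfix : w ξ = ξ)
    (h : HasLogSlope w ξ k) : ∀ n : ℕ, HasLogSlope (iterH w n) ξ ((n : ℤ) * k)
  | 0 => by simpa [iterH] using hls_refl ξ
  | n+1 => by
      have h2 : HasLogSlope w (iterH w n ξ) k := by rw [iterH_fix hfix n]; exact h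
      have := hls_trans (hls_iter hfix h n) h2
      have hco : ((n : ℤ) * k + k) = ((n+1 : ℕ) : ℤ) * k := by push_cast; ring
      rw [hco] at this
      exact this

lemma conjH_iterH (ψ w : Cantor ≃ₜ Cantor) :
    ∀ n, conjH ψ (iterH w n) = iterH (conjH ψ w) n
  | 0 => conjH_refl ψ
  | n+1 => by
      show conjH ψ ((iterH w n).trans w) = (iterH (conjH ψ w) n).trans (conjH ψ w)
      rw [conjH_trans, conjH_iterH ψ w n]

/-! ### Closure properties of V -/

lemma memV_refl : memV (Homeomorph.refl Cantor) := fun x =>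
  ⟨[], [], x, by rw [cat_nil], fun _ => rfl⟩

lemma memV_trans {v u : Cantor ≃ₜ Cantor} (hv : memV v) (hu : memV u) :
    memV (v.trans u) := by
  intro x
  obtain ⟨k, hk⟩ := slope_exists hv x
  obtain ⟨j, hj⟩ := slope_exists hu (v x)
  obtain ⟨m, w, y, hx, hr, -⟩ := hls_trans hk hj
  exact ⟨m, w, y, hx, hr⟩

lemma memV_symm {v : Cantor ≃ₜ Cantor} (hv : memV v) : memV v.symm := by
  intro x
  obtain ⟨k, hk⟩ := slope_exists hv (v.symm x)
  have := hls_symm hk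
  rw [Homeomorph.apply_symm_apply] at this
  obtain ⟨m, w, y, hx, hr, -⟩ := this
  exact ⟨m, w, y, hx, hr⟩

lemma memV_iterH {w : Cantor ≃ₜ Cantor} (hw : memV w) : ∀ n, memV (iterH w n)
  | 0 => memV_refl
  | n+1 => memV_trans (memV_iterH hw n) hw

lemma memV_conjH {φ : Cantor ≃ₜ Cantor} (hφ : NormalizesV φ)
    {v : Cantor ≃ₜ Cantor} (hv : memV v) : memV (conjH φ v) := by
  have : conjH φ v ∈ (conjH φ) '' {v | memV v} := ⟨v, hv, rfl⟩
  rwa [hφ] at this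

lemma memV_conjH_symm {φ : Cantor ≃ₜ Cantor} (hφ : NormalizesV φ)
    {v : Cantor ≃ₜ Cantor} (hv : memV v) : memV (conjH φ.symm v) := by
  have : v ∈ (conjH φ) '' {v | memV v} := by rw [hφ]; exact hv
  obtain ⟨w, hw, hwv⟩ := this
  have : conjH φ.symm v = w := by rw [← hwv, conjH_symm_conjH]
  rwa [this]

/-! ### Germ transfer -/

lemma conj_local_id {ψ W : Cantor ≃ₜ Cantor} {ξ : Cantor} {m : List Bool} {t : Cantor}
    (hξ : ξ = cat m t) (hloc : ∀ z, W (cat m z) = cat m z) :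
    ∃ n, ∀ z' ∈ Cyl n (ψ ξ), conjH ψ W z' = z' := by
  have hopen : IsOpen ((ψ.symm : Cantor → Cantor) ⁻¹' (Cyl m.length ξ)) :=
    (isOpen_Cyl _ _).preimage ψ.symm.continuous
  have hmem : ψ ξ ∈ (ψ.symm : Cantor → Cantor) ⁻¹' (Cyl m.length ξ) := by
    show ψ.symm (ψ ξ) ∈ Cyl m.length ξ
    rw [Homeomorph.symm_apply_apply]
    exact Cyl_self _ _
  obtain ⟨n, hn⟩ := cyl_subset_of_isOpen hopen hmem
  refine ⟨n, fun z' hz' => ?_⟩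
  have h1 : ψ.symm z' ∈ Cyl m.length ξ := hn hz'
  have h2 : ψ.symm z' = cat m (shf (ψ.symm z') m.length) := eq_cat_of_mem_Cyl hξ h1
  rw [conjH_apply, h2, hloc, ← h2, Homeomorph.apply_symm_apply]

lemma slope_conj_eq {ψ w₁ w₂ : Cantor ≃ₜ Cantor} {ξ : Cantor} {j S₁ S₂ : ℤ}
    (hf₁ : w₁ ξ = ξ) (hf₂ : w₂ ξ = ξ)
    (h₁ : HasLogSlope w₁ ξ j) (h₂ : HasLogSlope w₂ ξ j)
    (hc₁ : HasLogSlope (conjH ψ w₁) (ψ ξ) S₁)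
    (hc₂ : HasLogSlope (conjH ψ w₂) (ψ ξ) S₂) : S₁ = S₂ := by
  have hw2fix : w₂.symm ξ = ξ := by
    have h := congrArg w₂.symm hf₂
    rw [Homeomorph.symm_apply_apply] at h
    exact h.symm
  have hW : HasLogSlope (w₁.trans w₂.symm) ξ 0 := by
    have h2' : HasLogSlope w₂.symm ξ (-j) := by
      have := hls_symm h₂; rwa [hf₂] at this
    have h2'' : HasLogSlope w₂.symm (w₁ ξ) (-j) := by rw [hf₁]; exact h2'
    have := hls_trans h₁ h2''
    simpa using this
  have hWfix : (w₁.trans w₂.symm) ξ = ξ := by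
    show w₂.symm (w₁ ξ) = ξ
    rw [hf₁, hw2fix]
  obtain ⟨m, t, hξm, hloc⟩ := local_id_of_slope_zero hWfix hW
  obtain ⟨n, hn⟩ := conj_local_id (ψ := ψ) hξm hloc
  have hEQ : conjH ψ (w₁.trans w₂.symm) = (conjH ψ w₁).trans (conjH ψ w₂).symm := by
    rw [conjH_trans, conjH_symm]
  have hslope : HasLogSlope (conjH ψ (w₁.trans w₂.symm)) (ψ ξ) (S₁ + -S₂) := by
    rw [hEQ]
    have hc₂' : HasLogSlope (conjH ψ w₂).symm (ψ ξ) (-S₂) := by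
      have := hls_symm hc₂; rwa [conjH_fix hf₂] at this
    have hc₂'' : HasLogSlope (conjH ψ w₂).symm (conjH ψ w₁ (ψ ξ)) (-S₂) := by
      rw [conjH_fix hf₁]; exact hc₂'
    exact hls_trans hc₁ hc₂''
  have := slope_zero_of_local_id hn hslope
  omega

/-! ### Periodicity and prime words -/

lemma tailSeq_period (c : List Bool) (n : ℕ) :
    tailSeq c (n + c.length) = tailSeq c n := by
  simp [tailSeq, Nat.add_mod_right]

lemma tailSeq_unfold {c : List Bool} (hc : c ≠ []) :
    cat c (tailSeq c) = tailSeq c := by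
  have hl : 0 < c.length := List.length_pos_iff.mpr hc
  funext n
  by_cases h : n < c.length
  · rw [cat_eval_lt _ _ h]; simp [tailSeq, Nat.mod_eq_of_lt h]
  · push_neg at h
    rw [cat_eval_ge _ _ h]
    show tailSeq c (n - c.length) = tailSeq c n
    have hh : n - c.length + c.length = n := Nat.sub_add_cancel h
    conv_rhs => rw [← hh]
    rw [tailSeq_period]

lemma per_iter {u : ℕ → Bool} {r : ℕ} (h : ∀ n, u (n + r) = u n) :
    ∀ (K n : ℕ), u (n + K * r) = u n
  | 0, n => by simp
  | K+1, n => by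
      have e : n + (K+1) * r = (n + K * r) + r := by ring
      rw [e, h, per_iter h K n]

lemma per_gcd {u : ℕ → Bool} {p q : ℕ} (hp0 : 0 < p) (hq0 : 0 < q)
    (hp : ∀ n, u (n + p) = u n) (hq : ∀ n, u (n + q) = u n) :
    ∀ n, u (n + Nat.gcd p q) = u n := by
  set g := Nat.gcd p q with hgdef
  obtain ⟨A, B, hAB⟩ : ∃ A B : ℕ, A * p = g + B * q := by
    have hg : (g : ℤ) = p * Nat.gcdA p q + q * Nat.gcdB p q := Nat.gcd_eq_gcd_ab p q
    set a := Nat.gcdA p q with ha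
    set b := Nat.gcdB p q with hb
    set M : ℤ := |a| + |b| + 1 with hM
    have hq1 : (1:ℤ) ≤ q := by exact_mod_cast hq0
    have hp1 : (1:ℤ) ≤ p := by exact_mod_cast hp0
    have hM0 : 0 ≤ M := by positivity
    have hMq : M * 1 ≤ M * q := mul_le_mul_of_nonneg_left hq1 hM0
    have hMp : M * 1 ≤ M * p := mul_le_mul_of_nonneg_left hp1 hM0
    have hA : 0 ≤ a + M * q := by
      have := neg_abs_le a
      have := abs_nonneg b
      linarith
    have hB : 0 ≤ M * p - b := by
      have := le_abs_self b
      have := abs_nonneg a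
      linarith
    refine ⟨(a + M * q).toNat, (M * p - b).toNat, ?_⟩
    have key : ((a + M * q).toNat : ℤ) * p = g + ((M * p - b).toNat : ℤ) * q := by
      rw [Int.toNat_of_nonneg hA, Int.toNat_of_nonneg hB]
      linear_combination -hg
    exact_mod_cast key
  intro n
  have h3 : u (n + A * p) = u n := per_iter hp A n
  have h2 : n + A * p = n + g + B * q := by omega
  rw [h2, per_iter hq B (n + g)] at h3
  exact h3

lemma pw_length (s : List Bool) : ∀ K, ((List.replicate K s).flatten).length = K * s.length
  | 0 => by simp
  | K+1 => by
      rw [List.replicate_succ, List.flatten_cons, List.length_append, pw_length s K]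
      ring

lemma pw_getD (s : List Bool) (hs : 0 < s.length) :
    ∀ (K i : ℕ), i < K * s.length →
      ((List.replicate K s).flatten).getD i false = s.getD (i % s.length) false
  | 0, i, h => by simp at h
  | K+1, i, h => by
      rw [List.replicate_succ, List.flatten_cons]
      by_cases hi : i < s.length
      · rw [List.getD_eq_getElem?_getD, List.getElem?_append_left hi,
          ← List.getD_eq_getElem?_getD, Nat.mod_eq_of_lt hi]
      · push_neg at hi
        rw [List.getD_eq_getElem?_getD, List.getElem?_append_right hi,
          ← List.getD_eq_getElem?_getD]
        have h2 : i - s.length < K * s.length := by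
          rw [Nat.succ_mul] at h; omega
        rw [pw_getD s hs K _ h2]
        congr 1
        have e : i = (i - s.length) + s.length := by omega
        conv_rhs => rw [e]
        rw [Nat.add_mod_right]

lemma getD_take {c : List Bool} {g j : ℕ} (hj : j < g) (hg : g ≤ c.length) :
    (c.take g).getD j false = c.getD j false := by
  have h1 : j < (c.take g).length := by simp [List.length_take]; omega
  have h2 : j < c.length := by omega
  rw [List.getD_eq_getElem _ _ h1, List.getD_eq_getElem _ _ h2]
  simp [List.getElem_take]

lemma prime_dvd_of_two_periods {c : List Bool} (hc : PrimeWord c) {y w : List Bool}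
    {t : Cantor} {s : List Bool} (hs : s ≠ [])
    (hx1 : cat y (tailSeq c) = cat w t) (ht : cat s t = t) :
    c.length ∣ s.length := by
  have hp0 : 0 < c.length := List.length_pos_iff.mpr hc.1
  have hq0 : 0 < s.length := List.length_pos_iff.mpr hs
  have hxy : ∀ n, (cat y (tailSeq c)) (y.length + n) = tailSeq c n :=
    fun n => cat_eval_add y _ n
  have hxw : ∀ n, (cat y (tailSeq c)) (w.length + n) = t n := fun n => by
    rw [hx1]; exact cat_eval_add w t n
  have htper : ∀ n, t (n + s.length) = t n := by
    intro n
    conv_lhs => rw [← ht]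
    rw [cat_eval_ge s t (by omega)]
    congr 1; omega
  set N := max y.length w.length with hN
  set u : ℕ → Bool := fun n => (cat y (tailSeq c)) (N + n) with hu
  have hup : ∀ n, u (n + c.length) = u n := by
    intro n
    show (cat y (tailSeq c)) (N + (n + c.length)) = (cat y (tailSeq c)) (N + n)
    have h1 : N + n = y.length + (N - y.length + n) := by omega
    have h2 : N + (n + c.length) = y.length + (N - y.length + n + c.length) := by omega
    rw [h1, h2, hxy, hxy]
    exact tailSeq_period c _
  have huq : ∀ n, u (n + s.length) = u n := by
    intro n
    show (cat y (tailSeq c)) (N + (n + s.length)) = (cat y (tailSeq c)) (N + n)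
    have h1 : N + n = w.length + (N - w.length + n) := by omega
    have h2 : N + (n + s.length) = w.length + (N - w.length + n + s.length) := by omega
    rw [h1, h2, hxw, hxw]
    exact htper _
  have hug := per_gcd hp0 hq0 hup huq
  set g := Nat.gcd c.length s.length with hgdef
  have hgp : g ∣ c.length := Nat.gcd_dvd_left _ _
  have hg0 : 0 < g := Nat.gcd_pos_of_pos_left _ hp0
  have hgle : g ≤ c.length := Nat.le_of_dvd hp0 hgp
  have hNp : N ≤ N * c.length := Nat.le_mul_of_pos_right N hp0
  have hcper : ∀ i, tailSeq c (i + g) = tailSeq c i := by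
    intro i
    have hKp : ∀ (m : ℕ), tailSeq c (m + N * c.length) = tailSeq c m := fun m =>
      per_iter (fun n => tailSeq_period c n) N m
    have e1 : y.length + (i + N * c.length) = N + (y.length + i + N * c.length - N) := by
      omega
    have e2 : y.length + (i + g + N * c.length)
        = N + ((y.length + i + N * c.length - N) + g) := by omega
    calc tailSeq c (i + g) = tailSeq c (i + g + N * c.length) := (hKp _).symm
      _ = (cat y (tailSeq c)) (y.length + (i + g + N * c.length)) := (hxy _).symm
      _ = u ((y.length + i + N * c.length - N) + g) := by rw [e2]
      _ = u (y.length + i + N * c.length - N) := hug _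
      _ = (cat y (tailSeq c)) (y.length + (i + N * c.length)) := by rw [e1]
      _ = tailSeq c (i + N * c.length) := hxy _
      _ = tailSeq c i := hKp _
  have hgetD : ∀ i, i < c.length → c.getD i false = c.getD (i % g) false := by
    intro i hi
    have e1 : tailSeq c i = c.getD i false := by
      simp [tailSeq, Nat.mod_eq_of_lt hi]
    have himod : i % g < c.length := lt_of_lt_of_le (Nat.mod_lt _ hg0) hgle
    have e2 : tailSeq c (i % g) = c.getD (i % g) false := by
      simp [tailSeq, Nat.mod_eq_of_lt himod]
    have e3 : tailSeq c i = tailSeq c (i % g) := by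
      have e4 : i % g + (i / g) * g = i := Nat.mod_add_div' i g
      conv_lhs => rw [← e4]
      exact per_iter hcper (i / g) (i % g)
    rw [← e1, e3, e2]
  have hgp' : g = c.length := by
    by_contra hne
    have hglt : g < c.length := lt_of_le_of_ne hgle hne
    obtain ⟨Kq, hKq⟩ := hgp
    have hK2 : 2 ≤ Kq := by
      rcases Nat.lt_or_ge Kq 2 with h2 | h2
      · interval_cases Kq <;> omega
      · exact h2
    apply hc.2 (c.take g) Kq hK2
    have hdlen : (c.take g).length = g := by
      simp [List.length_take]; omega
    apply List.ext_getElem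
    · rw [pw_length, hdlen, hKq, Nat.mul_comm]
    · intro i h1 h2
      rw [← List.getD_eq_getElem _ false, ← List.getD_eq_getElem _ false]
      have hi2 : i < Kq * (c.take g).length := by
        rw [hdlen, Nat.mul_comm Kq g, ← hKq]
        exact h1
      rw [pw_getD _ (by rw [hdlen]; omega) Kq i hi2, hdlen]
      have himod : i % g < g := Nat.mod_lt _ hg0
      rw [getD_take himod hgle]
      exact hgetD i h1
  have hfin : g ∣ s.length := Nat.gcd_dvd_right _ _
  rwa [hgp'] at hfin

/-! ### Normal form at a fixed point -/

lemma slope_normal_form {v : Cantor ≃ₜ Cantor} {x : Cantor} {k : ℤ}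
    (hfix : v x = x) (hk : HasLogSlope v x k) (hk0 : k ≠ 0) :
    ∃ (w s : List Bool) (t : Cantor),
      s ≠ [] ∧ (s.length : ℤ) = |k| ∧ x = cat w t ∧ cat s t = t := by
  obtain ⟨m, w, y, hx, hr, hkk⟩ := hk
  have hwx : x = cat w y := by
    have h1 : v x = cat w y := by conv_lhs => rw [hx]; rw [hr]
    rw [hfix] at h1
    exact h1
  have hne : ∀ (δ : ℕ), 0 < δ → preW y δ ≠ [] := by
    intro δ hδ h
    apply_fun List.length at h
    simp [preW_length] at h
    omega
  rcases lt_or_gt_of_ne hk0 with hneg | hpos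
  · have hlen : m.length ≤ w.length := by omega
    obtain ⟨-, hy⟩ := prefix_split hx hwx hlen
    refine ⟨m, preW y (w.length - m.length), y, hne _ (by omega), ?_, hx, ?_⟩
    · rw [preW_length]
      have : |k| = -k := abs_of_neg hneg
      rw [this]
      push_cast
      omega
    · calc cat (preW y (w.length - m.length)) y
          = cat (preW y (w.length - m.length)) (shf y (w.length - m.length)) :=
            congrArg _ hy
        _ = y := cat_pre_shf y _
  · have hlen : w.length ≤ m.length := by omega
    obtain ⟨-, hy⟩ := prefix_split hwx hx hlen
    refine ⟨w, preW y (m.length - w.length), y, hne _ (by omega), ?_, hwx, ?_⟩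
    · rw [preW_length]
      have : |k| = k := abs_of_pos hpos
      rw [this]
      push_cast
      omega
    · calc cat (preW y (m.length - w.length)) y
          = cat (preW y (m.length - w.length)) (shf y (m.length - w.length)) :=
            congrArg _ hy
        _ = y := cat_pre_shf y _

lemma div_slope {c : List Bool} (hc : PrimeWord c) {x : Cantor} {v : Cantor ≃ₜ Cantor}
    {k : ℤ} (hxc : InTailClass x c) (hfix : v x = x)
    (hk : HasLogSlope v x k) (hk0 : k ≠ 0) : (c.length : ℤ) ∣ k := by
  obtain ⟨y, hy⟩ := hxc
  obtain ⟨w, s, t, hs, hsl, hxw, hst⟩ := slope_normal_form hfix hk hk0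
  have hdvd : c.length ∣ s.length :=
    prime_dvd_of_two_periods hc hs (by rw [← hy]; exact hxw) hst
  have h2 : (c.length : ℤ) ∣ (s.length : ℤ) := Int.natCast_dvd_natCast.mpr hdvd
  rw [hsl] at h2
  exact (dvd_abs _ _).mp h2

/-! ### Attracting fixed points -/

def Attr (v : Cantor ≃ₜ Cantor) (x : Cantor) : Prop :=
  ∃ n, ∀ y ∈ Cyl n x, ∀ M, ∃ J, ∀ j ≥ J, (⇑v)^[j] y ∈ Cyl M x

abbrev pw (s : List Bool) (j : ℕ) : List Bool := (List.replicate j s).flatten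

lemma pw_zero (s : List Bool) : pw s 0 = [] := rfl

lemma pw_succ_front (s : List Bool) (j : ℕ) : pw s (j+1) = s ++ pw s j := by
  rw [pw, List.replicate_succ, List.flatten_cons]

lemma pw_succ_back (s : List Bool) (j : ℕ) : pw s (j+1) = pw s j ++ s := by
  rw [pw, List.replicate_succ', List.flatten_append]
  simp

lemma t_pw {s : List Bool} {t : Cantor} (ht : cat s t = t) :
    ∀ j, cat (pw s j) t = t
  | 0 => by rw [pw_zero, cat_nil]
  | j+1 => by rw [pw_succ_front, cat_append, t_pw ht j, ht]

lemma iter_contract {v : Cantor ≃ₜ Cantor} {m s : List Bool}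
    (hr : ∀ z, v (cat m z) = cat m (cat s z)) :
    ∀ (j : ℕ) (z : Cantor), (⇑v)^[j] (cat m z) = cat m (cat (pw s j) z)
  | 0, z => by rw [Function.iterate_zero_apply, pw_zero, cat_nil]
  | j+1, z => by
      rw [Function.iterate_succ_apply', iter_contract hr j z, hr,
        pw_succ_front, cat_append]

lemma slope_neg_form {v : Cantor ≃ₜ Cantor} {x : Cantor} {k : ℤ}
    (hfix : v x = x) (hk : HasLogSlope v x k) (hneg : k < 0) :
    ∃ (m s : List Bool) (t : Cantor), s ≠ [] ∧ (s.length : ℤ) = -k ∧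
      x = cat m t ∧ cat s t = t ∧ ∀ z, v (cat m z) = cat m (cat s z) := by
  obtain ⟨m, w, y, hx, hr, hkk⟩ := hk
  have hwx : x = cat w y := by
    have h1 : v x = cat w y := by conv_lhs => rw [hx]; rw [hr]
    rw [hfix] at h1; exact h1
  have hlen : m.length ≤ w.length := by omega
  obtain ⟨hw, hy⟩ := prefix_split hx hwx hlen
  set s := preW y (w.length - m.length) with hs
  have hslen : s.length = w.length - m.length := preW_length _ _
  refine ⟨m, s, y, ?_, ?_, hx, ?_, ?_⟩
  · intro h; apply_fun List.length at h; simp [hslen] at h; omega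
  · rw [hslen]; push_cast; omega
  · calc cat s y = cat s (shf y (w.length - m.length)) := congrArg _ hy
      _ = y := cat_pre_shf y _
  · intro z; rw [hr z, hw, cat_append]

lemma slope_pos_form {v : Cantor ≃ₜ Cantor} {x : Cantor} {k : ℤ}
    (hfix : v x = x) (hk : HasLogSlope v x k) (hpos : 0 < k) :
    ∃ (w s : List Bool) (t : Cantor), s ≠ [] ∧ (s.length : ℤ) = k ∧
      x = cat w t ∧ cat s t = t ∧ ∀ z, v (cat (w ++ s) z) = cat w z := by
  obtain ⟨m, w, y, hx, hr, hkk⟩ := hk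
  have hwx : x = cat w y := by
    have h1 : v x = cat w y := by conv_lhs => rw [hx]; rw [hr]
    rw [hfix] at h1; exact h1
  have hlen : w.length ≤ m.length := by omega
  obtain ⟨hm, hy⟩ := prefix_split hwx hx hlen
  set s := preW y (m.length - w.length) with hs
  have hslen : s.length = m.length - w.length := preW_length _ _
  refine ⟨w, s, y, ?_, ?_, hwx, ?_, ?_⟩
  · intro h; apply_fun List.length at h; simp [hslen] at h; omega
  · rw [hslen]; push_cast; omega
  · calc cat s y = cat s (shf y (m.length - w.length)) := congrArg _ hy
      _ = y := cat_pre_shf y _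
  · intro z; rw [← hm, hr z]

lemma attr_of_neg_slope {v : Cantor ≃ₜ Cantor} {x : Cantor} {k : ℤ}
    (hfix : v x = x) (hk : HasLogSlope v x k) (hneg : k < 0) : Attr v x := by
  obtain ⟨m, s, t, hs, -, hx, hst, hrule⟩ := slope_neg_form hfix hk hneg
  have hs1 : 0 < s.length := List.length_pos_iff.mpr hs
  refine ⟨m.length, fun y hy M => ?_⟩
  have hy2 : y = cat m (shf y m.length) := eq_cat_of_mem_Cyl hx hy
  refine ⟨M, fun j hj i hi => ?_⟩
  have hx2 : x = cat (m ++ pw s j) t := by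
    conv_rhs => rw [cat_append, t_pw hst j]
    exact hx
  have hyj : (⇑v)^[j] y = cat (m ++ pw s j) (shf y m.length) := by
    conv_lhs => rw [hy2]
    rw [iter_contract hrule j, ← cat_append]
  have hlen : (m ++ pw s j).length = m.length + j * s.length := by
    simp [pw_length]
  have hjs : j ≤ j * s.length := Nat.le_mul_of_pos_right j hs1
  have hiL : i < (m ++ pw s j).length := by rw [hlen]; omega
  rw [hyj, cat_eval_lt _ _ hiL, hx2, cat_eval_lt _ _ hiL]

lemma iter_expand {v : Cantor ≃ₜ Cantor} {w s : List Bool}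
    (hr : ∀ z, v (cat (w ++ s) z) = cat w z) :
    ∀ (j : ℕ) (ζ : Cantor), (⇑v)^[j] (cat (w ++ pw s j) ζ) = cat w ζ
  | 0, ζ => by rw [Function.iterate_zero_apply, pw_zero, List.append_nil]
  | j+1, ζ => by
      rw [Function.iterate_succ_apply]
      have e : cat (w ++ pw s (j+1)) ζ = cat (w ++ s) (cat (pw s j) ζ) := by
        rw [pw_succ_front, ← cat_append, List.append_assoc]
      rw [e, hr, ← cat_append]
      exact iter_expand hr j ζ

lemma not_attr_of_pos_slope {v : Cantor ≃ₜ Cantor} {x : Cantor} {k : ℤ}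
    (hfix : v x = x) (hk : HasLogSlope v x k) (hpos : 0 < k) : ¬ Attr v x := by
  obtain ⟨w, s, t, hs, -, hx, hst, hrule⟩ := slope_pos_form hfix hk hpos
  have hs1 : 0 < s.length := List.length_pos_iff.mpr hs
  rintro ⟨n, hA⟩
  set L := max n w.length with hL
  set y := cat (preW x L) (fun i => !(x (L + i))) with hy
  have hyC : y ∈ Cyl n x := by
    intro i hi
    rw [hy, cat_eval_lt _ _ (by rw [preW_length]; omega), preW_getD (by omega)]
  have hyL : y L = !(x L) := by
    rw [hy, cat_eval_ge _ _ (by rw [preW_length])]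
    simp [preW_length]
  obtain ⟨J, hJ⟩ := hA y hyC w.length
  have KC : ∀ (j : ℕ) (z : Cantor), preW ((⇑v)^[j] z) w.length = w →
      preW z (w ++ pw s j).length = w ++ pw s j := by
    intro j
    induction j with
    | zero =>
        intro z h
        simpa [pw_zero] using h
    | succ j ih =>
        intro z h
        rw [Function.iterate_succ_apply'] at h
        set ζ₁ := shf (v ((⇑v)^[j] z)) w.length with hζ₁
        have h1 : v ((⇑v)^[j] z) = cat w ζ₁ := by
          conv_lhs => rw [← cat_pre_shf (v ((⇑v)^[j] z)) w.length, h]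
        have h2 : (⇑v)^[j] z = cat (w ++ s) ζ₁ := by
          apply v.injective
          rw [hrule, h1]
        have h3 : preW ((⇑v)^[j] z) w.length = w := by
          rw [h2, cat_append, pre_cat]
        have h4 := ih z h3
        set ζ₂ := shf z (w ++ pw s j).length with hζ₂
        have h5 : z = cat (w ++ pw s j) ζ₂ := by
          conv_lhs => rw [← cat_pre_shf z (w ++ pw s j).length, h4]
        have h6 : (⇑v)^[j] z = cat w ζ₂ := by rw [h5]; exact iter_expand hrule j ζ₂
        have h7 : cat w ζ₂ = cat w (cat s ζ₁) := by
          rw [← h6, h2, cat_append]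
        have h8 : ζ₂ = cat s ζ₁ := cat_inj h7
        have h9 : z = cat (w ++ pw s (j+1)) ζ₁ := by
          rw [h5, h8, pw_succ_back, ← List.append_assoc, cat_append (w ++ pw s j) s]
        rw [h9, pre_cat]
  have hwpre : ∀ j, j ≥ J → preW ((⇑v)^[j] y) w.length = w := by
    intro j hj
    have hmem := hJ j hj
    have : preW ((⇑v)^[j] y) w.length = preW x w.length := preW_congr le_rfl hmem
    rw [this, hx, pre_cat]
  set j := max J (L + 1) with hj
  have h1 := KC j y (hwpre j (le_max_left _ _))
  have hx2 : x = cat (w ++ pw s j) t := by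
    conv_rhs => rw [cat_append, t_pw hst j]
    exact hx
  have hjs : j ≤ j * s.length := Nat.le_mul_of_pos_right j hs1
  have hlen : (w ++ pw s j).length = w.length + j * s.length := by simp [pw_length]
  have hLlt : L < (w ++ pw s j).length := by rw [hlen]; omega
  have hyL2 : y L = x L := by
    conv_lhs => rw [← cat_pre_shf y (w ++ pw s j).length, h1]
    rw [cat_eval_lt _ _ hLlt, hx2, cat_eval_lt _ _ hLlt]
  rw [hyL] at hyL2
  simp at hyL2

lemma conjH_iterate (ψ v : Cantor ≃ₜ Cantor) (j : ℕ) (z : Cantor) :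
    (⇑(conjH ψ v))^[j] (ψ z) = ψ ((⇑v)^[j] z) := by
  induction j with
  | zero => rfl
  | succ j ih =>
      rw [Function.iterate_succ_apply', Function.iterate_succ_apply', ih,
        conjH_apply, Homeomorph.symm_apply_apply]

lemma attr_conj {ψ v : Cantor ≃ₜ Cantor} {x : Cantor} (h : Attr v x) :
    Attr (conjH ψ v) (ψ x) := by
  obtain ⟨n, hA⟩ := h
  have hmem1 : ψ x ∈ (ψ.symm : Cantor → Cantor) ⁻¹' (Cyl n x) := by
    show ψ.symm (ψ x) ∈ Cyl n x
    rw [Homeomorph.symm_apply_apply]; exact Cyl_self _ _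
  obtain ⟨n', hn'⟩ := cyl_subset_of_isOpen
    ((isOpen_Cyl n x).preimage ψ.symm.continuous) hmem1
  refine ⟨n', fun y' hy' M => ?_⟩
  have hmem2 : x ∈ (ψ : Cantor → Cantor) ⁻¹' (Cyl M (ψ x)) := Cyl_self _ _
  obtain ⟨mT, hmT⟩ := cyl_subset_of_isOpen
    ((isOpen_Cyl M (ψ x)).preimage ψ.continuous) hmem2
  obtain ⟨J, hJ⟩ := hA (ψ.symm y') (hn' hy') mT
  refine ⟨J, fun j hj => ?_⟩
  have hiter : (⇑(conjH ψ v))^[j] y' = ψ ((⇑v)^[j] (ψ.symm y')) := by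
    conv_lhs => rw [← Homeomorph.apply_symm_apply ψ y']
    exact conjH_iterate ψ v j (ψ.symm y')
  rw [hiter]
  exact hmT (hJ j hj)

/-! ### Transpositions of disjoint cylinders, and the local generator -/

def Incomp (a b : List Bool) : Prop :=
  ∃ i, i < a.length ∧ i < b.length ∧ a.getD i false ≠ b.getD i false

lemma Incomp.symm {a b : List Bool} (h : Incomp a b) : Incomp b a := by
  obtain ⟨i, h1, h2, h3⟩ := h
  exact ⟨i, h2, h1, fun e => h3 e.symm⟩

def swapFun (a b : List Bool) (z : Cantor) : Cantor :=
  if preW z a.length = a then cat b (shf z a.length)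
  else if preW z b.length = b then cat a (shf z b.length) else z

lemma not_pre_of_pre {a b : List Bool} (h : Incomp a b) {z : Cantor}
    (hz : preW z a.length = a) : preW z b.length ≠ b := by
  obtain ⟨i, h1, h2, h3⟩ := h
  intro hb
  apply h3
  have e1 : a.getD i false = z i := by rw [← hz, preW_getD h1]
  have e2 : b.getD i false = z i := by rw [← hb, preW_getD h2]
  rw [e1, e2]

lemma swapFun_cat_a {a b : List Bool} (z : Cantor) :
    swapFun a b (cat a z) = cat b z := by
  rw [swapFun, if_pos (pre_cat a z), shf_cat]

lemma swapFun_cat_b {a b : List Bool} (h : Incomp a b) (z : Cantor) :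
    swapFun a b (cat b z) = cat a z := by
  have h1 : preW (cat b z) a.length ≠ a := by
    intro ha
    exact not_pre_of_pre h ha (pre_cat b z)
  rw [swapFun, if_neg h1, if_pos (pre_cat b z), shf_cat]

lemma swapFun_id {a b : List Bool} {z : Cantor}
    (ha : preW z a.length ≠ a) (hb : preW z b.length ≠ b) :
    swapFun a b z = z := by
  rw [swapFun, if_neg ha, if_neg hb]

lemma swapFun_invol {a b : List Bool} (h : Incomp a b) :
    Function.Involutive (swapFun a b) := by
  intro z
  by_cases ha : preW z a.length = a
  · have hz : z = cat a (shf z a.length) := by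
      conv_lhs => rw [← cat_pre_shf z a.length, ha]
    rw [hz, swapFun_cat_a, swapFun_cat_b h]
  · by_cases hb : preW z b.length = b
    · have hz : z = cat b (shf z b.length) := by
        conv_lhs => rw [← cat_pre_shf z b.length, hb]
      rw [hz, swapFun_cat_b h, swapFun_cat_a]
    · rw [swapFun_id ha hb, swapFun_id ha hb]

lemma cont_cat_shf (w : List Bool) (n : ℕ) :
    Continuous (fun z : Cantor => cat w (shf z n)) := by
  apply continuous_pi
  intro i
  by_cases h : i < w.length
  · have e : (fun z : Cantor => cat w (shf z n) i) = fun _ => w.getD i false := by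
      funext z; rw [cat_eval_lt _ _ h]
    rw [e]; exact continuous_const
  · push_neg at h
    have e : (fun z : Cantor => cat w (shf z n) i) = fun z => z (n + (i - w.length)) := by
      funext z; rw [cat_eval_ge _ _ h]; rfl
    rw [e]; exact continuous_apply _

lemma swapFun_cont (a b : List Bool) : Continuous (swapFun a b) := by
  rw [continuous_iff_continuousAt]
  intro z₀
  set n := max a.length b.length with hn
  have hev : ∀ z ∈ Cyl n z₀, preW z a.length = preW z₀ a.length ∧
      preW z b.length = preW z₀ b.length := by
    intro z hz
    exact ⟨preW_congr (le_max_left _ _) hz, preW_congr (le_max_right _ _) hz⟩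
  have hnb : Cyl n z₀ ∈ nhds z₀ := (isOpen_Cyl n z₀).mem_nhds (Cyl_self n z₀)
  by_cases ha : preW z₀ a.length = a
  · apply ContinuousAt.congr ((cont_cat_shf b a.length).continuousAt)
    apply Filter.eventuallyEq_of_mem hnb
    intro z hz
    rw [swapFun, if_pos ((hev z hz).1.trans ha)]
  · by_cases hb : preW z₀ b.length = b
    · apply ContinuousAt.congr ((cont_cat_shf a b.length).continuousAt)
      apply Filter.eventuallyEq_of_mem hnb
      intro z hz
      rw [swapFun, if_neg (by rw [(hev z hz).1]; exact ha),
        if_pos ((hev z hz).2.trans hb)]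
    · apply ContinuousAt.congr continuous_id.continuousAt
      apply Filter.eventuallyEq_of_mem hnb
      intro z hz
      rw [swapFun, if_neg (by rw [(hev z hz).1]; exact ha),
        if_neg (by rw [(hev z hz).2]; exact hb)]
      rfl

noncomputable def swapH (a b : List Bool) (h : Incomp a b) : Cantor ≃ₜ Cantor :=
  { toEquiv := (swapFun_invol h).toPerm
    continuous_toFun := swapFun_cont a b
    continuous_invFun := swapFun_cont a b }

lemma swapH_apply (a b : List Bool) (h : Incomp a b) (z : Cantor) :
    swapH a b h z = swapFun a b z := rfl

lemma memV_swapH (a b : List Bool) (h : Incomp a b) : memV (swapH a b h) := by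
  intro x
  by_cases ha : preW x a.length = a
  · refine ⟨a, b, shf x a.length, ?_, ?_⟩
    · conv_lhs => rw [← cat_pre_shf x a.length, ha]
    · intro z; rw [swapH_apply, swapFun_cat_a]
  · by_cases hb : preW x b.length = b
    · refine ⟨b, a, shf x b.length, ?_, ?_⟩
      · conv_lhs => rw [← cat_pre_shf x b.length, hb]
      · intro z; rw [swapH_apply, swapFun_cat_b h]
    · set n := max a.length b.length with hn
      refine ⟨preW x n, preW x n, shf x n, (cat_pre_shf x n).symm, ?_⟩
      intro z
      rw [swapH_apply]
      apply swapFun_id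
      · intro hcon
        apply ha
        have heq : preW (cat (preW x n) z) a.length = preW x a.length := by
          refine preW_congr le_rfl (fun i hi => ?_)
          have hin : i < n := lt_of_lt_of_le hi (le_max_left _ _)
          rw [cat_eval_lt _ _ (by rw [preW_length]; exact hin), preW_getD hin]
        exact heq.symm.trans hcon
      · intro hcon
        apply hb
        have heq : preW (cat (preW x n) z) b.length = preW x b.length := by
          refine preW_congr le_rfl (fun i hi => ?_)
          have hin : i < n := lt_of_lt_of_le hi (le_max_right _ _)
          rw [cat_eval_lt _ _ (by rw [preW_length]; exact hin), preW_getD hin]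
        exact heq.symm.trans hcon

/-- The local generator: an element of `V` fixing `x = y·c∞` with log-slope `|c|`. -/
lemma exists_generator (c y : List Bool) (hc : c ≠ []) :
    ∃ σ : Cantor ≃ₜ Cantor, memV σ ∧ σ (cat y (tailSeq c)) = cat y (tailSeq c) ∧
      HasLogSlope σ (cat y (tailSeq c)) (c.length : ℤ) := by
  set u := y ++ c with hu
  have hu0 : 0 < u.length := by
    rw [hu, List.length_append]
    have := List.length_pos_iff.mpr hc
    omega
  set e : List Bool := [!(u.getD 0 false)] with he
  have huc0 : (u ++ c).getD 0 false = u.getD 0 false := by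
    rw [List.getD_eq_getElem?_getD, List.getElem?_append_left hu0,
      ← List.getD_eq_getElem?_getD]
  have h1 : Incomp (u ++ c) e := by
    refine ⟨0, by rw [List.length_append]; omega, by simp [he], ?_⟩
    rw [huc0, he]
    simp
  have h2 : Incomp u e := by
    refine ⟨0, hu0, by simp [he], ?_⟩
    rw [he]; simp
  set σ := (swapH (u ++ c) e h1).trans (swapH u e h2) with hσ
  have hrule : ∀ z, σ (cat (u ++ c) z) = cat u z := by
    intro z
    show swapH u e h2 (swapH (u ++ c) e h1 (cat (u ++ c) z)) = cat u z
    rw [swapH_apply (u ++ c) e h1, swapFun_cat_a, swapH_apply u e h2,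
      swapFun_cat_b h2]
  have hxu : cat y (tailSeq c) = cat (u ++ c) (tailSeq c) := by
    rw [cat_append, hu, cat_append, tailSeq_unfold hc, tailSeq_unfold hc]
  refine ⟨σ, memV_trans (memV_swapH _ _ h1) (memV_swapH _ _ h2), ?_, ?_⟩
  · conv_lhs => rw [hxu, hrule]
    rw [hu, cat_append, tailSeq_unfold hc]
  · refine ⟨u ++ c, u, tailSeq c, hxu, hrule, ?_⟩
    simp

/-! ### Power transfer -/

lemma power_transfer₀ (ψ : Cantor ≃ₜ Cantor) {ξ : Cantor} {W G : Cantor ≃ₜ Cantor}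
    {J g₀ SW SG d : ℤ} (hd : 0 ≤ d)
    (hWf : W ξ = ξ) (hGf : G ξ = ξ)
    (hW : HasLogSlope W ξ J) (hG : HasLogSlope G ξ g₀) (hJ : J = d * g₀)
    (hSW : HasLogSlope (conjH ψ W) (ψ ξ) SW)
    (hSG : HasLogSlope (conjH ψ G) (ψ ξ) SG) : SW = d * SG := by
  set D := d.toNat with hD
  have hDd : (D : ℤ) = d := Int.toNat_of_nonneg hd
  have hGit : HasLogSlope (iterH G D) ξ J := by
    have := hls_iter hGf hG D
    rwa [hDd, ← hJ] at this
  have hGitfix : iterH G D ξ = ξ := iterH_fix hGf D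
  have hconjit : HasLogSlope (conjH ψ (iterH G D)) (ψ ξ) ((D : ℤ) * SG) := by
    rw [conjH_iterH]
    exact hls_iter (conjH_fix hGf) hSG D
  have h := slope_conj_eq hWf hGitfix hW hGit hSW hconjit
  rw [h, hDd]

lemma power_transfer (ψ : Cantor ≃ₜ Cantor) {ξ : Cantor} {W G : Cantor ≃ₜ Cantor}
    {J g₀ SW SG d : ℤ}
    (hWf : W ξ = ξ) (hGf : G ξ = ξ)
    (hW : HasLogSlope W ξ J) (hG : HasLogSlope G ξ g₀) (hJ : J = d * g₀)
    (hSW : HasLogSlope (conjH ψ W) (ψ ξ) SW)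
    (hSG : HasLogSlope (conjH ψ G) (ψ ξ) SG) : SW = d * SG := by
  rcases le_or_gt 0 d with hd | hd
  · exact power_transfer₀ ψ hd hWf hGf hW hG hJ hSW hSG
  · have hWf' : W.symm ξ = ξ := by
      have h := congrArg W.symm hWf
      rw [Homeomorph.symm_apply_apply] at h
      exact h.symm
    have hW' : HasLogSlope W.symm ξ (-J) := by
      have := hls_symm hW
      rwa [hWf] at this
    have hSW' : HasLogSlope (conjH ψ W.symm) (ψ ξ) (-SW) := by
      rw [conjH_symm]
      have := hls_symm hSW
      rwa [conjH_fix hWf] at this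
    have h := power_transfer₀ ψ (by omega : (0:ℤ) ≤ -d) hWf' hGf hW' hG
      (by rw [hJ]; ring) hSW' hSG
    have h3 : -(-SW) = -(-d * SG) := by rw [h]
    simpa using h3

end SRI

open SRI

/-- For a rational point `x` in the tail class of a prime word `m_x`,
a normalizing homeomorphism `φ` with `φ x` in the tail class of a prime word `m_{φx}`,
and `v ∈ V` fixing `x` with nontrivial slope, one has
`log₂((φvφ⁻¹)'(φx)) / |m_{φx}| = log₂(v'(x)) / |m_x|` and `|m_x|` divides `log₂(v'(x))`. -/
theorem slope_ratio_invariant (φ : Cantor ≃ₜ Cantor) (hφ : NormalizesV φ)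
    (x : Cantor) (mx mφx : List Bool)
    (hmx : PrimeWord mx) (hx : InTailClass x mx)
    (hmφx : PrimeWord mφx) (hφx : InTailClass (φ x) mφx)
    (v : Cantor ≃ₜ Cantor) (hv : memV v) (hfix : v x = x)
    (k k' : ℤ) (hk : HasLogSlope v x k) (hk0 : k ≠ 0)
    (hk' : HasLogSlope (conjH φ v) (φ x) k') :
    k' * (mx.length : ℤ) = k * (mφx.length : ℤ) ∧ (mx.length : ℤ) ∣ k := by
  obtain ⟨yx, hyx⟩ := hx
  obtain ⟨yφ, hyφ⟩ := hφx
  have hmx0 : (0:ℤ) < mx.length := by exact_mod_cast List.length_pos_iff.mpr hmx.1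
  have hmφx0 : (0:ℤ) < mφx.length := by exact_mod_cast List.length_pos_iff.mpr hmφx.1
  -- local generators at `x` and at `φ x`
  obtain ⟨σ, hσV, hσfix', hσsl'⟩ := exists_generator mx yx hmx.1
  rw [← hyx] at hσfix' hσsl'
  obtain ⟨σ', hσ'V, hσ'fix', hσ'sl'⟩ := exists_generator mφx yφ hmφx.1
  rw [← hyφ] at hσ'fix' hσ'sl'
  -- `τ = φσφ⁻¹`
  have hτV : memV (conjH φ σ) := memV_conjH hφ hσV
  obtain ⟨q, hq⟩ := slope_exists hτV (φ x)
  have hτfix : conjH φ σ (φ x) = φ x := conjH_fix hσfix'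
  have hback : conjH φ.symm (conjH φ σ) = σ := conjH_symm_conjH φ σ
  have hσsl'' : HasLogSlope (conjH φ.symm (conjH φ σ)) (φ.symm (φ x)) (mx.length : ℤ) := by
    rw [hback, Homeomorph.symm_apply_apply]; exact hσsl'
  have hreflsl : HasLogSlope (conjH φ.symm (Homeomorph.refl Cantor)) (φ.symm (φ x)) 0 := by
    rw [conjH_refl]; exact hls_refl _
  have hq0 : q ≠ 0 := by
    intro h0
    have h := slope_conj_eq (ψ := φ.symm) hτfix
      (show Homeomorph.refl Cantor (φ x) = φ x from rfl)
      (h0 ▸ hq) (hls_refl (φ x)) hσsl'' hreflsl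
    omega
  -- divisibilities
  have hdvd_k : (mx.length : ℤ) ∣ k := div_slope hmx ⟨yx, hyx⟩ hfix hk hk0
  have hdvd_q : (mφx.length : ℤ) ∣ q := div_slope hmφx ⟨yφ, hyφ⟩ hτfix hq hq0
  -- `ρ = φ⁻¹σ'φ`
  have hρV : memV (conjH φ.symm σ') := memV_conjH_symm hφ hσ'V
  have hρfix' : conjH φ.symm σ' (φ.symm (φ x)) = φ.symm (φ x) := conjH_fix hσ'fix'
  have hρfix : conjH φ.symm σ' x = x := by
    rwa [Homeomorph.symm_apply_apply] at hρfix'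
  obtain ⟨r, hr⟩ := slope_exists hρV x
  have hr' : HasLogSlope (conjH φ.symm σ') (φ.symm (φ x)) r := by
    rwa [Homeomorph.symm_apply_apply]
  have hr0 : r ≠ 0 := by
    intro h0
    have hfwd : conjH φ (conjH φ.symm σ') = σ' := conjH_conjH_symm φ σ'
    have hσ'x : HasLogSlope (conjH φ (conjH φ.symm σ')) (φ x) (mφx.length : ℤ) := by
      rw [hfwd]; exact hσ'sl'
    have hreflsl2 : HasLogSlope (conjH φ (Homeomorph.refl Cantor)) (φ x) 0 := by
      rw [conjH_refl]; exact hls_refl _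
    have h := slope_conj_eq (ψ := φ) hρfix rfl (h0 ▸ hr) (hls_refl x) hσ'x hreflsl2
    omega
  obtain ⟨a, ha⟩ := hdvd_k
  obtain ⟨b, hb⟩ := hdvd_q
  have hdvd_r : (mx.length : ℤ) ∣ r := div_slope hmx ⟨yx, hyx⟩ hρfix hr hr0
  obtain ⟨cc, hcc⟩ := hdvd_r
  -- slope transfers
  have hT1 : k' = a * q :=
    power_transfer φ hfix hσfix' hk hσsl' (by rw [ha]; ring) hk' hq
  have hT2 : (mx.length : ℤ) = b * r :=
    power_transfer φ.symm hτfix hσ'fix' hq hσ'sl' (by rw [hb]; ring) hσsl'' hr'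
  -- `b` is a unit
  have hbc : b * cc = 1 := by
    have h4 : (mx.length:ℤ) * 1 = (mx.length:ℤ) * (b * cc) := by
      calc (mx.length:ℤ) * 1 = (mx.length:ℤ) := mul_one _
        _ = b * r := hT2
        _ = b * ((mx.length:ℤ) * cc) := by rw [hcc]
        _ = (mx.length:ℤ) * (b * cc) := by ring
    exact (mul_left_cancel₀ (ne_of_gt hmx0) h4).symm
  have hbunit : b = 1 ∨ b = -1 := Int.isUnit_iff.mp (IsUnit.of_mul_eq_one cc hbc)
  have hb1 : b = 1 := by
    rcases hbunit with h | h
    · exact h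
    · exfalso
      have hqneg : q < 0 := by
        rw [hb, h]
        nlinarith [hmφx0]
      have hattr : Attr (conjH φ σ) (φ x) := attr_of_neg_slope hτfix hq hqneg
      have hattr2 : Attr (conjH φ.symm (conjH φ σ)) (φ.symm (φ x)) := attr_conj hattr
      rw [hback, Homeomorph.symm_apply_apply] at hattr2
      exact not_attr_of_pos_slope hσfix' hσsl' hmx0 hattr2
  refine ⟨?_, ⟨a, ha⟩⟩
  rw [hT1, hb, hb1, mul_one, ha]
  ring
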